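/- Logarithmic Hardy inequality: let f be locally absolutely continuous on (0,∞) with ∫₀^∞ |f'(r)|² r dr < ∞. Then for every R > 0, (1/4) ∫₀^∞ |f(r) - f(R)|² / (r · log²(R/r)) dr ≤ ∫₀^∞ |f'(r)|² r dr. -/

import Mathlib

open MeasureTheory Set Filter Topology

open scoped ENNReal


lemma lhi_subst (R c : ℝ) (hR : 0 < R) (hc : c ≠ 0) {s : Set ℝ} (hs : MeasurableSet s)
    (g : ℝ → ℝ≥0∞) :
    ∫⁻ x in ((fun u => R * Real.exp (c * u)) '' s), g x
      = ∫⁻ u in s, ENNReal.ofReal (|c| * (R * Real.exp (c * u))) * g (R * Real.exp (c * u)) := by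
  have hderiv : ∀ u ∈ s, HasFDerivWithinAt (fun u => R * Real.exp (c * u))
      ((1 : ℝ →L[ℝ] ℝ).smulRight (c * (R * Real.exp (c * u)))) s u := by
    intro u _
    have h1 : HasDerivAt (fun u => R * Real.exp (c * u)) (c * (R * Real.exp (c * u))) u := by
      have := (((hasDerivAt_id u).const_mul c).exp.const_mul R)
      simp only [id] at this
      rw [show c * (R * Real.exp (c * u)) = R * (Real.exp (c * u) * (c * 1)) by ring]
      exact this
    exact h1.hasFDerivAt.hasFDerivWithinAt
  have hinj : InjOn (fun u => R * Real.exp (c * u)) s := by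
    intro u _ v _ h
    have h2 := Real.exp_injective (mul_left_cancel₀ hR.ne' h)
    exact mul_left_cancel₀ hc h2
  have := lintegral_image_eq_lintegral_abs_det_fderiv_mul volume hs hderiv hinj g
  simpa [ContinuousLinearMap.det_smulRight, abs_mul,
    abs_of_pos (mul_pos hR (Real.exp_pos _))] using this

lemma lhi_intA {a : ℝ} (ha : 0 < a) :
    ∫⁻ u in Ioi a, ENNReal.ofReal ((Real.sqrt u ^ 3)⁻¹)
      = ENNReal.ofReal (2 * (Real.sqrt a)⁻¹) := by
  have hcong : ∫⁻ u in Ioi a, ENNReal.ofReal ((Real.sqrt u ^ 3)⁻¹)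
      = ∫⁻ u in Ioi a, ENNReal.ofReal (u ^ (-(3:ℝ)/2)) := by
    refine setLIntegral_congr_fun measurableSet_Ioi (fun u hu => ?_)
    have hu0 : 0 ≤ u := (ha.trans hu).le
    rw [show (-(3:ℝ)/2) = -((1/2 : ℝ) * ((3:ℕ):ℝ)) by norm_num, Real.rpow_neg hu0,
      Real.rpow_mul hu0, Real.rpow_natCast, ← Real.sqrt_eq_rpow]
  rw [hcong, ← ofReal_integral_eq_lintegral_ofReal]
  · rw [integral_Ioi_rpow_of_lt (by norm_num) ha]
    rw [show (-(3:ℝ)/2 + 1) = -(1/2 : ℝ) by norm_num, Real.rpow_neg ha.le,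
      ← Real.sqrt_eq_rpow]
    congr 1
    ring
  · exact integrableOn_Ioi_rpow_of_lt (by norm_num) ha
  · filter_upwards [ae_restrict_mem measurableSet_Ioi] with u hu
    exact Real.rpow_nonneg (ha.trans hu).le _

lemma lhi_intB {b : ℝ} (hb : 0 < b) :
    ∫⁻ u in Ioo 0 b, ENNReal.ofReal ((Real.sqrt u)⁻¹)
      = ENNReal.ofReal (2 * Real.sqrt b) := by
  have hcong : ∫⁻ u in Ioo 0 b, ENNReal.ofReal ((Real.sqrt u)⁻¹)
      = ∫⁻ u in Ioo 0 b, ENNReal.ofReal (u ^ (-(1:ℝ)/2)) := by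
    refine setLIntegral_congr_fun measurableSet_Ioo (fun u hu => ?_)
    rw [show (-(1:ℝ)/2) = -(1/2 : ℝ) by norm_num, Real.rpow_neg hu.1.le, ← Real.sqrt_eq_rpow]
  rw [hcong, Measure.restrict_congr_set Ioo_ae_eq_Ioc, ← ofReal_integral_eq_lintegral_ofReal]
  · rw [← intervalIntegral.integral_of_le hb.le, integral_rpow (Or.inl (by norm_num))]
    rw [show (-(1:ℝ)/2 + 1) = (1/2 : ℝ) by norm_num,
      Real.zero_rpow (by norm_num : (1/2:ℝ) ≠ 0), ← Real.sqrt_eq_rpow]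
    congr 1
    ring
  · exact (intervalIntegral.intervalIntegrable_rpow' (by norm_num)).1
  · filter_upwards [ae_restrict_mem measurableSet_Ioc] with u hu
    exact Real.rpow_nonneg hu.1.le _

lemma lhi_image_Ioo {R r : ℝ} (hR : 0 < R) (hr : 0 < r) (hrR : r < R) :
    (fun u => R * Real.exp (-1 * u)) '' Ioo 0 (Real.log (R/r)) = Ioo r R := by
  ext x
  simp only [mem_image, mem_Ioo]
  constructor
  · rintro ⟨u, ⟨hu0, hub⟩, rfl⟩
    constructor
    · have h1 : Real.exp (-1 * Real.log (R/r)) < Real.exp (-1 * u) :=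
        Real.exp_lt_exp.2 (by linarith)
      have h2 : Real.exp (-1 * Real.log (R/r)) = r / R := by
        rw [neg_one_mul, Real.exp_neg, Real.exp_log (div_pos hR hr), inv_div]
      rw [h2] at h1
      calc r = R * (r / R) := by field_simp
        _ < R * Real.exp (-1 * u) := (mul_lt_mul_iff_right₀ hR).2 h1
    · have h1 : Real.exp (-1 * u) < 1 := Real.exp_lt_one_iff.2 (by linarith)
      calc R * Real.exp (-1 * u) < R * 1 := (mul_lt_mul_iff_right₀ hR).2 h1
        _ = R := mul_one R
  · rintro ⟨hrx, hxR⟩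
    have hx : 0 < x := hr.trans hrx
    refine ⟨Real.log (R/x), ⟨Real.log_pos ((one_lt_div hx).2 hxR), ?_⟩, ?_⟩
    · exact Real.log_lt_log (div_pos hR hx) ((div_lt_div_iff_of_pos_left hR hx hr).2 hrx)
    · rw [neg_one_mul, Real.exp_neg, Real.exp_log (div_pos hR hx), inv_div]
      field_simp

lemma lhi_image_Ioi {R s : ℝ} (hR : 0 < R) (hs : 0 < s) (hsR : s < R) :
    (fun u => R * Real.exp (-1 * u)) '' Ioi (Real.log (R/s)) = Ioo 0 s := by
  ext x
  simp only [mem_image, mem_Ioi, mem_Ioo]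
  constructor
  · rintro ⟨u, hu, rfl⟩
    refine ⟨mul_pos hR (Real.exp_pos _), ?_⟩
    have h1 : Real.exp (-1 * u) < Real.exp (-1 * Real.log (R/s)) :=
      Real.exp_lt_exp.2 (by linarith)
    have h2 : Real.exp (-1 * Real.log (R/s)) = s / R := by
      rw [neg_one_mul, Real.exp_neg, Real.exp_log (div_pos hR hs), inv_div]
    rw [h2] at h1
    calc R * Real.exp (-1 * u) < R * (s / R) := (mul_lt_mul_iff_right₀ hR).2 h1
      _ = s := by field_simp
  · rintro ⟨hx, hxs⟩
    refine ⟨Real.log (R/x), ?_, ?_⟩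
    · exact Real.log_lt_log (div_pos hR hs) ((div_lt_div_iff_of_pos_left hR hs hx).2 hxs)
    · rw [neg_one_mul, Real.exp_neg, Real.exp_log (div_pos hR hx), inv_div]
      field_simp

lemma lhi_image_Ioo' {R r : ℝ} (hR : 0 < R) (hrR : R < r) :
    (fun u => R * Real.exp (1 * u)) '' Ioo 0 (Real.log (r/R)) = Ioo R r := by
  have hr : 0 < r := hR.trans hrR
  ext x
  simp only [mem_image, mem_Ioo]
  constructor
  · rintro ⟨u, ⟨hu0, hub⟩, rfl⟩
    constructor
    · have h1 : Real.exp 0 < Real.exp (1 * u) := Real.exp_lt_exp.2 (by linarith)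
      rw [Real.exp_zero] at h1
      calc R = R * 1 := (mul_one R).symm
        _ < R * Real.exp (1 * u) := (mul_lt_mul_iff_right₀ hR).2 h1
    · have h1 : Real.exp (1 * u) < Real.exp (Real.log (r/R)) := Real.exp_lt_exp.2 (by linarith)
      rw [Real.exp_log (div_pos hr hR)] at h1
      calc R * Real.exp (1 * u) < R * (r / R) := (mul_lt_mul_iff_right₀ hR).2 h1
        _ = r := by field_simp
  · rintro ⟨hRx, hxr⟩
    have hx : 0 < x := hR.trans hRx
    refine ⟨Real.log (x/R), ⟨Real.log_pos ((one_lt_div hR).2 hRx), ?_⟩, ?_⟩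
    · exact Real.log_lt_log (div_pos hx hR) (by exact (div_lt_div_iff_of_pos_right hR).2 hxr)
    · rw [one_mul, Real.exp_log (div_pos hx hR)]
      field_simp

lemma lhi_image_Ioi' {R s : ℝ} (hR : 0 < R) (hsR : R < s) :
    (fun u => R * Real.exp (1 * u)) '' Ioi (Real.log (s/R)) = Ioi s := by
  have hs : 0 < s := hR.trans hsR
  ext x
  simp only [mem_image, mem_Ioi]
  constructor
  · rintro ⟨u, hu, rfl⟩
    have h1 : Real.exp (Real.log (s/R)) < Real.exp (1 * u) := Real.exp_lt_exp.2 (by linarith)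
    rw [Real.exp_log (div_pos hs hR)] at h1
    calc s = R * (s / R) := by field_simp
      _ < R * Real.exp (1 * u) := (mul_lt_mul_iff_right₀ hR).2 h1
  · intro hsx
    have hx : 0 < x := hs.trans hsx
    refine ⟨Real.log (x/R), ?_, ?_⟩
    · exact Real.log_lt_log (div_pos hs hR) ((div_lt_div_iff_of_pos_right hR).2 hsx)
    · rw [one_mul, Real.exp_log (div_pos hx hR)]
      field_simp

lemma lhi_log_neg {R u : ℝ} (hR : 0 < R) : Real.log (R / (R * Real.exp (-1 * u))) = u := by
  rw [neg_one_mul, Real.exp_neg]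
  have : R / (R * (Real.exp u)⁻¹) = Real.exp u := by
    field_simp
  rw [this, Real.log_exp]

lemma lhi_log_pos' {R u : ℝ} (hR : 0 < R) : Real.log ((R * Real.exp (1 * u)) / R) = u := by
  rw [one_mul]
  have : R * Real.exp u / R = Real.exp u := by field_simp
  rw [this, Real.log_exp]

lemma lhi_D1 {R r : ℝ} (hR : 0 < R) (hr : 0 < r) (hrR : r < R) :
    ∫⁻ s in Ioo r R, ENNReal.ofReal ((s * Real.sqrt (Real.log (R/s)))⁻¹)
      = ENNReal.ofReal (2 * Real.sqrt (Real.log (R/r))) := by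
  have hb : 0 < Real.log (R/r) := Real.log_pos ((one_lt_div hr).2 hrR)
  rw [← lhi_image_Ioo hR hr hrR, lhi_subst R (-1) hR (by norm_num) measurableSet_Ioo,
    ← lhi_intB hb]
  refine setLIntegral_congr_fun measurableSet_Ioo (fun u hu => ?_)
  have he : (0:ℝ) < R * Real.exp (-1 * u) := mul_pos hR (Real.exp_pos _)
  rw [lhi_log_neg hR, show |(-1:ℝ)| = 1 by norm_num, one_mul,
    ← ENNReal.ofReal_mul he.le, mul_inv, ← mul_assoc, mul_inv_cancel₀ he.ne', one_mul]

lemma lhi_D2 {R s : ℝ} (hR : 0 < R) (hs : 0 < s) (hsR : s < R) :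
    ∫⁻ r in Ioo 0 s, ENNReal.ofReal ((r * Real.sqrt (Real.log (R/r)) ^ 3)⁻¹)
      = ENNReal.ofReal (2 * (Real.sqrt (Real.log (R/s)))⁻¹) := by
  have ha : 0 < Real.log (R/s) := Real.log_pos ((one_lt_div hs).2 hsR)
  rw [← lhi_image_Ioi hR hs hsR, lhi_subst R (-1) hR (by norm_num) measurableSet_Ioi,
    ← lhi_intA ha]
  refine setLIntegral_congr_fun measurableSet_Ioi (fun u hu => ?_)
  have he : (0:ℝ) < R * Real.exp (-1 * u) := mul_pos hR (Real.exp_pos _)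
  rw [lhi_log_neg hR, show |(-1:ℝ)| = 1 by norm_num, one_mul,
    ← ENNReal.ofReal_mul he.le, mul_inv, ← mul_assoc, mul_inv_cancel₀ he.ne', one_mul]

lemma lhi_D1' {R r : ℝ} (hR : 0 < R) (hrR : R < r) :
    ∫⁻ s in Ioo R r, ENNReal.ofReal ((s * Real.sqrt (Real.log (s/R)))⁻¹)
      = ENNReal.ofReal (2 * Real.sqrt (Real.log (r/R))) := by
  have hb : 0 < Real.log (r/R) := Real.log_pos ((one_lt_div hR).2 hrR)
  rw [← lhi_image_Ioo' hR hrR, lhi_subst R 1 hR (by norm_num) measurableSet_Ioo,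
    ← lhi_intB hb]
  refine setLIntegral_congr_fun measurableSet_Ioo (fun u hu => ?_)
  have he : (0:ℝ) < R * Real.exp (1 * u) := mul_pos hR (Real.exp_pos _)
  rw [lhi_log_pos' hR, show |(1:ℝ)| = 1 by norm_num, one_mul,
    ← ENNReal.ofReal_mul he.le, mul_inv, ← mul_assoc, mul_inv_cancel₀ he.ne', one_mul]

lemma lhi_D2' {R s : ℝ} (hR : 0 < R) (hsR : R < s) :
    ∫⁻ r in Ioi s, ENNReal.ofReal ((r * Real.sqrt (Real.log (r/R)) ^ 3)⁻¹)
      = ENNReal.ofReal (2 * (Real.sqrt (Real.log (s/R)))⁻¹) := by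
  have ha : 0 < Real.log (s/R) := Real.log_pos ((one_lt_div hR).2 hsR)
  rw [← lhi_image_Ioi' hR hsR, lhi_subst R 1 hR (by norm_num) measurableSet_Ioi,
    ← lhi_intA ha]
  refine setLIntegral_congr_fun measurableSet_Ioi (fun u hu => ?_)
  have he : (0:ℝ) < R * Real.exp (1 * u) := mul_pos hR (Real.exp_pos _)
  rw [lhi_log_pos' hR, show |(1:ℝ)| = 1 by norm_num, one_mul,
    ← ENNReal.ofReal_mul he.le, mul_inv, ← mul_assoc, mul_inv_cancel₀ he.ne', one_mul]

lemma lhi_key (f' : ℝ → ℂ) {a b : ℝ} (h0 : 0 < a) (ℓ : ℝ → ℝ) (mℓ : Measurable ℓ)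
    (hℓ : ∀ s ∈ Ioo a b, 0 < ℓ s)
    (hmeas : AEMeasurable f' (volume.restrict (Ioo a b)))
    {N C : ℝ} (hN0 : 0 ≤ N)
    (hN : ENNReal.ofReal N ≤ ∫⁻ s in Ioo a b, ENNReal.ofReal ‖f' s‖)
    (hD : ∫⁻ s in Ioo a b, ENNReal.ofReal ((s * Real.sqrt (ℓ s))⁻¹) = ENNReal.ofReal C) :
    ENNReal.ofReal (N ^ 2)
      ≤ ENNReal.ofReal C *
        ∫⁻ s in Ioo a b, ENNReal.ofReal (‖f' s‖ ^ 2 * (s * Real.sqrt (ℓ s))) := by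
  set w : ℝ → ℝ := fun s => s * Real.sqrt (ℓ s) with hw_def
  have hw : ∀ s ∈ Ioo a b, 0 < w s := fun s hs =>
    mul_pos (h0.trans hs.1) (Real.sqrt_pos.2 (hℓ s hs))
  set g : ℝ → ℝ≥0∞ := fun s => ENNReal.ofReal (‖f' s‖ * Real.sqrt (w s)) with hg_def
  set h : ℝ → ℝ≥0∞ := fun s => ENNReal.ofReal ((Real.sqrt (w s))⁻¹) with hh_def
  have mw : Measurable w := measurable_id.mul (Real.continuous_sqrt.measurable.comp mℓ)
  have hg : AEMeasurable g (volume.restrict (Ioo a b)) :=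
    (hmeas.norm.mul (Real.continuous_sqrt.measurable.comp mw).aemeasurable).ennreal_ofReal
  have hh : AEMeasurable h (volume.restrict (Ioo a b)) :=
    (((Real.continuous_sqrt.measurable.comp mw).inv).ennreal_ofReal).aemeasurable
  have hold := ENNReal.lintegral_mul_le_Lp_mul_Lq (volume.restrict (Ioo a b))
    (Real.HolderConjugate.two_two : Real.HolderConjugate 2 2) hg hh
  have e1 : ∫⁻ s in Ioo a b, (g * h) s = ∫⁻ s in Ioo a b, ENNReal.ofReal ‖f' s‖ := by
    refine setLIntegral_congr_fun measurableSet_Ioo (fun s hs => ?_)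
    have hws := hw s hs
    simp only [Pi.mul_apply, hg_def, hh_def]
    rw [← ENNReal.ofReal_mul (by positivity), mul_assoc,
      mul_inv_cancel₀ (Real.sqrt_pos.2 hws).ne', mul_one]
  have e2 : ∫⁻ s in Ioo a b, g s ^ (2:ℝ) = ∫⁻ s in Ioo a b, ENNReal.ofReal (‖f' s‖ ^ 2 * w s) := by
    refine setLIntegral_congr_fun measurableSet_Ioo (fun s hs => ?_)
    rw [hg_def, show (2:ℝ) = ((2:ℕ):ℝ) by norm_num, ENNReal.rpow_natCast,
      ← ENNReal.ofReal_pow (by positivity), mul_pow, Real.sq_sqrt (hw s hs).le]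
  have e3 : ∫⁻ s in Ioo a b, h s ^ (2:ℝ) = ENNReal.ofReal C := by
    rw [← hD]
    refine setLIntegral_congr_fun measurableSet_Ioo (fun s hs => ?_)
    rw [hh_def, show (2:ℝ) = ((2:ℕ):ℝ) by norm_num, ENNReal.rpow_natCast,
      ← ENNReal.ofReal_pow (by positivity), inv_pow, Real.sq_sqrt (hw s hs).le]
  rw [e1, e2, e3] at hold
  set A := ∫⁻ s in Ioo a b, ENNReal.ofReal (‖f' s‖ ^ 2 * w s) with hA
  have step : ENNReal.ofReal N ≤ A ^ ((1:ℝ)/2) * ENNReal.ofReal C ^ ((1:ℝ)/2) :=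
    hN.trans hold
  have sq : ENNReal.ofReal (N ^ 2) ≤ (A ^ ((1:ℝ)/2) * ENNReal.ofReal C ^ ((1:ℝ)/2)) ^ 2 := by
    rw [ENNReal.ofReal_pow hN0, pow_two, pow_two]
    exact mul_le_mul' step step
  refine sq.trans_eq ?_
  rw [mul_pow, ← ENNReal.rpow_natCast (A ^ ((1:ℝ)/2)) 2, ← ENNReal.rpow_natCast
    (ENNReal.ofReal C ^ ((1:ℝ)/2)) 2, ← ENNReal.rpow_mul, ← ENNReal.rpow_mul]
  norm_num
  rw [mul_comm]

lemma lhi_side_lt (f f' : ℝ → ℂ)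
    (hloc : ∀ s ∈ Ioi (0:ℝ), ∀ t ∈ Ioi (0:ℝ), IntervalIntegrable f' volume s t)
    (hFTC : ∀ s ∈ Ioi (0:ℝ), ∀ t ∈ Ioi (0:ℝ), f t - f s = ∫ r in s..t, f' r)
    (hmeas : AEMeasurable f' (volume.restrict (Ioi 0)))
    {R : ℝ} (hR : 0 < R) :
    ∫⁻ r in Ioo 0 R, ENNReal.ofReal (‖f r - f R‖^2 / (r * (Real.log (R / r))^2))
      ≤ ENNReal.ofReal 4 * ∫⁻ r in Ioo 0 R, ENNReal.ofReal (‖f' r‖^2 * r) := by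
  set L : ℝ → ℝ := fun x => Real.log (R / x) with hL_def
  set k : ℝ → ℝ≥0∞ := fun s => ENNReal.ofReal (‖f' s‖^2 * (s * Real.sqrt (L s))) with hk_def
  set c : ℝ → ℝ≥0∞ := fun r => ENNReal.ofReal (2 * (r * Real.sqrt (L r)^3)⁻¹) with hc_def
  have mL : Measurable L := Real.measurable_log.comp (measurable_const.div measurable_id)
  have mc : Measurable c := ENNReal.measurable_ofReal.comp
    (measurable_const.mul
      (measurable_id.mul ((Real.continuous_sqrt.measurable.comp mL).pow_const 3)).inv)
  have hmeas' : AEMeasurable f' (volume.restrict (Ioo 0 R)) :=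
    hmeas.mono_measure (Measure.restrict_mono Ioo_subset_Ioi_self le_rfl)
  have hk : AEMeasurable k (volume.restrict (Ioo 0 R)) :=
    ((hmeas'.norm.pow_const 2).mul
      ((measurable_id.mul (Real.continuous_sqrt.measurable.comp mL)).aemeasurable)).ennreal_ofReal
  have key : ∀ r ∈ Ioo 0 R,
      ENNReal.ofReal (‖f r - f R‖^2 / (r * (L r)^2)) ≤ c r * ∫⁻ s in Ioo r R, k s := by
    rintro r ⟨hr0, hrR⟩
    have hLr : 0 < L r := Real.log_pos ((one_lt_div hr0).2 hrR)
    have hS : 0 < Real.sqrt (L r) := Real.sqrt_pos.2 hLr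
    have hint' : IntervalIntegrable f' volume r R := hloc r hr0 R hR
    have hnorm : ‖f r - f R‖ ≤ ∫ s in r..R, ‖f' s‖ := by
      rw [norm_sub_rev, hFTC r hr0 R hR]
      exact intervalIntegral.norm_integral_le_integral_norm hrR.le
    have hNle : ENNReal.ofReal ‖f r - f R‖ ≤ ∫⁻ s in Ioo r R, ENNReal.ofReal ‖f' s‖ := by
      refine (ENNReal.ofReal_le_ofReal hnorm).trans ?_
      rw [intervalIntegral.integral_of_le hrR.le,
        ofReal_integral_eq_lintegral_ofReal hint'.norm.1 (ae_of_all _ fun s => norm_nonneg _),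
        ← Measure.restrict_congr_set Ioo_ae_eq_Ioc]
    have hmeas'' : AEMeasurable f' (volume.restrict (Ioo r R)) :=
      hmeas.mono_measure (Measure.restrict_mono (fun x hx => hr0.trans hx.1) le_rfl)
    have hkey := lhi_key f' hr0 L mL
      (fun s hs => Real.log_pos ((one_lt_div (hr0.trans hs.1)).2 hs.2)) hmeas''
      (norm_nonneg (f r - f R)) hNle (lhi_D1 hR hr0 hrR)
    calc ENNReal.ofReal (‖f r - f R‖^2 / (r * (L r)^2))
        = ENNReal.ofReal ((r * (L r)^2)⁻¹) * ENNReal.ofReal (‖f r - f R‖^2) := by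
          rw [← ENNReal.ofReal_mul (by positivity), inv_mul_eq_div]
      _ ≤ ENNReal.ofReal ((r * (L r)^2)⁻¹) *
            (ENNReal.ofReal (2 * Real.sqrt (L r)) * ∫⁻ s in Ioo r R, k s) :=
          mul_le_mul_right hkey _
      _ = c r * ∫⁻ s in Ioo r R, k s := by
          rw [← mul_assoc, ← ENNReal.ofReal_mul (by positivity)]
          congr 2
          have h2 : Real.sqrt (L r) ^ 2 = L r := Real.sq_sqrt hLr.le
          rw [← h2]
          field_simp
          rw [Real.sqrt_sq hS.le]
  have mono : ∫⁻ r in Ioo 0 R, ENNReal.ofReal (‖f r - f R‖^2 / (r * (L r)^2))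
      ≤ ∫⁻ r in Ioo 0 R, c r * ∫⁻ s in Ioo r R, k s := by
    refine lintegral_mono_ae ?_
    filter_upwards [ae_restrict_mem measurableSet_Ioo] with r hr using key r hr
  set F : ℝ × ℝ → ℝ≥0∞ :=
    fun p => {q : ℝ × ℝ | q.1 < q.2}.indicator (fun q => c q.1 * k q.2) p with hF_def
  have qmp : Measure.QuasiMeasurePreserving (Prod.snd : ℝ × ℝ → ℝ)
      ((volume.restrict (Ioo 0 R)).prod (volume.restrict (Ioo 0 R)))
      (volume.restrict (Ioo 0 R)) := by
    refine ⟨measurable_snd, ?_⟩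
    rw [Measure.map_snd_prod]
    exact Measure.smul_absolutelyContinuous
  have hFmeas : AEMeasurable F
      ((volume.restrict (Ioo 0 R)).prod (volume.restrict (Ioo 0 R))) := by
    refine AEMeasurable.indicator ?_ (measurableSet_lt measurable_fst measurable_snd)
    exact ((mc.comp measurable_fst).aemeasurable).mul (hk.comp_quasiMeasurePreserving qmp)
  have claim1 : ∀ r ∈ Ioo 0 R, c r * ∫⁻ s in Ioo r R, k s = ∫⁻ s in Ioo 0 R, F (r, s) := by
    rintro r ⟨hr0, hrR⟩
    have inner_eq : ∀ s, F (r, s) = (Ioi r).indicator (fun s => c r * k s) s := by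
      intro s
      simp only [hF_def, Set.indicator_apply, mem_setOf_eq, mem_Ioi]
    have hseteq : Ioi r ∩ Ioo 0 R = Ioo r R := by
      ext x
      simp only [mem_inter_iff, mem_Ioi, mem_Ioo]
      exact ⟨fun ⟨h1, _, h3⟩ => ⟨h1, h3⟩, fun ⟨h1, h2⟩ => ⟨h1, hr0.trans h1, h2⟩⟩
    rw [lintegral_congr inner_eq, lintegral_indicator measurableSet_Ioi,
      Measure.restrict_restrict measurableSet_Ioi, hseteq,
      lintegral_const_mul' _ _ ENNReal.ofReal_ne_top]
  have claim2 : ∀ s ∈ Ioo 0 R,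
      ∫⁻ r in Ioo 0 R, F (r, s) = ENNReal.ofReal 4 * ENNReal.ofReal (‖f' s‖^2 * s) := by
    rintro s ⟨hs0, hsR⟩
    have hLs : 0 < L s := Real.log_pos ((one_lt_div hs0).2 hsR)
    have hSs : 0 < Real.sqrt (L s) := Real.sqrt_pos.2 hLs
    have inner_eq : ∀ r, F (r, s) = (Iio s).indicator (fun r => c r * k s) r := by
      intro r
      simp only [hF_def, Set.indicator_apply, mem_setOf_eq, mem_Iio]
    have hseteq : Iio s ∩ Ioo 0 R = Ioo 0 s := by
      ext x
      simp only [mem_inter_iff, mem_Iio, mem_Ioo]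
      exact ⟨fun ⟨h1, h2, _⟩ => ⟨h2, h1⟩, fun ⟨h1, h2⟩ => ⟨h2, h1, h2.trans hsR⟩⟩
    have hc2 : ∫⁻ r in Ioo 0 s, c r
        = ENNReal.ofReal 2 * ENNReal.ofReal (2 * (Real.sqrt (L s))⁻¹) := by
      have e : ∫⁻ r in Ioo 0 s, c r
          = ∫⁻ r in Ioo 0 s, ENNReal.ofReal 2 * ENNReal.ofReal ((r * Real.sqrt (L r)^3)⁻¹) := by
        refine setLIntegral_congr_fun measurableSet_Ioo (fun r hr => ?_)
        rw [hc_def, ← ENNReal.ofReal_mul (by norm_num)]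
      rw [e, lintegral_const_mul' _ _ ENNReal.ofReal_ne_top, lhi_D2 hR hs0 hsR]
    rw [lintegral_congr inner_eq, lintegral_indicator measurableSet_Iio,
      Measure.restrict_restrict measurableSet_Iio, hseteq,
      lintegral_mul_const' _ _ ENNReal.ofReal_ne_top, hc2]
    rw [← ENNReal.ofReal_mul (by norm_num), ← ENNReal.ofReal_mul (by positivity),
      ← ENNReal.ofReal_mul (by norm_num)]
    congr 1
    field_simp
    ring
  calc ∫⁻ r in Ioo 0 R, ENNReal.ofReal (‖f r - f R‖^2 / (r * (L r)^2))
      ≤ ∫⁻ r in Ioo 0 R, c r * ∫⁻ s in Ioo r R, k s := mono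
    _ = ∫⁻ r in Ioo 0 R, ∫⁻ s in Ioo 0 R, F (r, s) :=
        setLIntegral_congr_fun measurableSet_Ioo claim1
    _ = ∫⁻ s in Ioo 0 R, ∫⁻ r in Ioo 0 R, F (r, s) :=
        lintegral_lintegral_swap (by exact hFmeas)
    _ = ∫⁻ s in Ioo 0 R, ENNReal.ofReal 4 * ENNReal.ofReal (‖f' s‖^2 * s) :=
        setLIntegral_congr_fun measurableSet_Ioo claim2
    _ = ENNReal.ofReal 4 * ∫⁻ s in Ioo 0 R, ENNReal.ofReal (‖f' s‖^2 * s) :=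
        lintegral_const_mul' _ _ ENNReal.ofReal_ne_top

lemma lhi_side_gt (f f' : ℝ → ℂ)
    (hloc : ∀ s ∈ Ioi (0:ℝ), ∀ t ∈ Ioi (0:ℝ), IntervalIntegrable f' volume s t)
    (hFTC : ∀ s ∈ Ioi (0:ℝ), ∀ t ∈ Ioi (0:ℝ), f t - f s = ∫ r in s..t, f' r)
    (hmeas : AEMeasurable f' (volume.restrict (Ioi 0)))
    {R : ℝ} (hR : 0 < R) :
    ∫⁻ r in Ioi R, ENNReal.ofReal (‖f r - f R‖^2 / (r * (Real.log (R / r))^2))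
      ≤ ENNReal.ofReal 4 * ∫⁻ r in Ioi R, ENNReal.ofReal (‖f' r‖^2 * r) := by
  set L : ℝ → ℝ := fun x => Real.log (x / R) with hL_def
  set k : ℝ → ℝ≥0∞ := fun s => ENNReal.ofReal (‖f' s‖^2 * (s * Real.sqrt (L s))) with hk_def
  set c : ℝ → ℝ≥0∞ := fun r => ENNReal.ofReal (2 * (r * Real.sqrt (L r)^3)⁻¹) with hc_def
  have hcong : ∫⁻ r in Ioi R, ENNReal.ofReal (‖f r - f R‖^2 / (r * (Real.log (R / r))^2))
      = ∫⁻ r in Ioi R, ENNReal.ofReal (‖f r - f R‖^2 / (r * (L r)^2)) := by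
    refine setLIntegral_congr_fun measurableSet_Ioi (fun r _ => ?_)
    rw [show Real.log (R / r) = -Real.log (r / R) by rw [← Real.log_inv, inv_div], neg_sq]
  rw [hcong]
  have mL : Measurable L := Real.measurable_log.comp (measurable_id.div_const R)
  have mc : Measurable c := ENNReal.measurable_ofReal.comp
    (measurable_const.mul
      (measurable_id.mul ((Real.continuous_sqrt.measurable.comp mL).pow_const 3)).inv)
  have hsub : Ioi R ⊆ Ioi (0:ℝ) := Ioi_subset_Ioi hR.le
  have hmeas' : AEMeasurable f' (volume.restrict (Ioi R)) :=
    hmeas.mono_measure (Measure.restrict_mono hsub le_rfl)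
  have hk : AEMeasurable k (volume.restrict (Ioi R)) :=
    ((hmeas'.norm.pow_const 2).mul
      ((measurable_id.mul (Real.continuous_sqrt.measurable.comp mL)).aemeasurable)).ennreal_ofReal
  have key : ∀ r ∈ Ioi R,
      ENNReal.ofReal (‖f r - f R‖^2 / (r * (L r)^2)) ≤ c r * ∫⁻ s in Ioo R r, k s := by
    intro r hRr
    rw [mem_Ioi] at hRr
    have hr0 : 0 < r := hR.trans hRr
    have hLr : 0 < L r := Real.log_pos ((one_lt_div hR).2 hRr)
    have hS : 0 < Real.sqrt (L r) := Real.sqrt_pos.2 hLr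
    have hint' : IntervalIntegrable f' volume R r := hloc R hR r hr0
    have hnorm : ‖f r - f R‖ ≤ ∫ s in R..r, ‖f' s‖ := by
      rw [hFTC R hR r hr0]
      exact intervalIntegral.norm_integral_le_integral_norm hRr.le
    have hNle : ENNReal.ofReal ‖f r - f R‖ ≤ ∫⁻ s in Ioo R r, ENNReal.ofReal ‖f' s‖ := by
      refine (ENNReal.ofReal_le_ofReal hnorm).trans ?_
      rw [intervalIntegral.integral_of_le hRr.le,
        ofReal_integral_eq_lintegral_ofReal hint'.norm.1 (ae_of_all _ fun s => norm_nonneg _),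
        ← Measure.restrict_congr_set Ioo_ae_eq_Ioc]
    have hmeas'' : AEMeasurable f' (volume.restrict (Ioo R r)) :=
      hmeas.mono_measure (Measure.restrict_mono (fun x hx => hR.trans hx.1) le_rfl)
    have hkey := lhi_key f' hR L mL
      (fun s hs => Real.log_pos ((one_lt_div hR).2 hs.1)) hmeas''
      (norm_nonneg (f r - f R)) hNle (lhi_D1' hR hRr)
    calc ENNReal.ofReal (‖f r - f R‖^2 / (r * (L r)^2))
        = ENNReal.ofReal ((r * (L r)^2)⁻¹) * ENNReal.ofReal (‖f r - f R‖^2) := by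
          rw [← ENNReal.ofReal_mul (by positivity), inv_mul_eq_div]
      _ ≤ ENNReal.ofReal ((r * (L r)^2)⁻¹) *
            (ENNReal.ofReal (2 * Real.sqrt (L r)) * ∫⁻ s in Ioo R r, k s) :=
          mul_le_mul_right hkey _
      _ = c r * ∫⁻ s in Ioo R r, k s := by
          rw [← mul_assoc, ← ENNReal.ofReal_mul (by positivity)]
          congr 2
          have h2 : Real.sqrt (L r) ^ 2 = L r := Real.sq_sqrt hLr.le
          rw [← h2]
          field_simp
          rw [Real.sqrt_sq hS.le]
  have mono : ∫⁻ r in Ioi R, ENNReal.ofReal (‖f r - f R‖^2 / (r * (L r)^2))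
      ≤ ∫⁻ r in Ioi R, c r * ∫⁻ s in Ioo R r, k s := by
    refine lintegral_mono_ae ?_
    filter_upwards [ae_restrict_mem measurableSet_Ioi] with r hr using key r hr
  set F : ℝ × ℝ → ℝ≥0∞ :=
    fun p => {q : ℝ × ℝ | q.2 < q.1}.indicator (fun q => c q.1 * k q.2) p with hF_def
  have qmp : Measure.QuasiMeasurePreserving (Prod.snd : ℝ × ℝ → ℝ)
      ((volume.restrict (Ioi R)).prod (volume.restrict (Ioi R)))
      (volume.restrict (Ioi R)) := by
    refine ⟨measurable_snd, ?_⟩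
    rw [Measure.map_snd_prod]
    exact Measure.smul_absolutelyContinuous
  have hFmeas : AEMeasurable F
      ((volume.restrict (Ioi R)).prod (volume.restrict (Ioi R))) := by
    refine AEMeasurable.indicator ?_ (measurableSet_lt measurable_snd measurable_fst)
    exact ((mc.comp measurable_fst).aemeasurable).mul (hk.comp_quasiMeasurePreserving qmp)
  have claim1 : ∀ r ∈ Ioi R, c r * ∫⁻ s in Ioo R r, k s = ∫⁻ s in Ioi R, F (r, s) := by
    intro r hRr
    rw [mem_Ioi] at hRr
    have inner_eq : ∀ s, F (r, s) = (Iio r).indicator (fun s => c r * k s) s := by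
      intro s
      simp only [hF_def, Set.indicator_apply, mem_setOf_eq, mem_Iio]
    have hseteq : Iio r ∩ Ioi R = Ioo R r := by
      ext x
      simp only [mem_inter_iff, mem_Iio, mem_Ioi, mem_Ioo]
      exact ⟨fun ⟨h1, h2⟩ => ⟨h2, h1⟩, fun ⟨h1, h2⟩ => ⟨h2, h1⟩⟩
    rw [lintegral_congr inner_eq, lintegral_indicator measurableSet_Iio,
      Measure.restrict_restrict measurableSet_Iio, hseteq,
      lintegral_const_mul' _ _ ENNReal.ofReal_ne_top]
  have claim2 : ∀ s ∈ Ioi R,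
      ∫⁻ r in Ioi R, F (r, s) = ENNReal.ofReal 4 * ENNReal.ofReal (‖f' s‖^2 * s) := by
    intro s hRs
    rw [mem_Ioi] at hRs
    have hLs : 0 < L s := Real.log_pos ((one_lt_div hR).2 hRs)
    have hSs : 0 < Real.sqrt (L s) := Real.sqrt_pos.2 hLs
    have inner_eq : ∀ r, F (r, s) = (Ioi s).indicator (fun r => c r * k s) r := by
      intro r
      simp only [hF_def, Set.indicator_apply, mem_setOf_eq, mem_Ioi]
    have hseteq : Ioi s ∩ Ioi R = Ioi s :=
      Set.inter_eq_self_of_subset_left (Ioi_subset_Ioi hRs.le)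
    have hc2 : ∫⁻ r in Ioi s, c r
        = ENNReal.ofReal 2 * ENNReal.ofReal (2 * (Real.sqrt (L s))⁻¹) := by
      have e : ∫⁻ r in Ioi s, c r
          = ∫⁻ r in Ioi s, ENNReal.ofReal 2 * ENNReal.ofReal ((r * Real.sqrt (L r)^3)⁻¹) := by
        refine setLIntegral_congr_fun measurableSet_Ioi (fun r hr => ?_)
        rw [hc_def, ← ENNReal.ofReal_mul (by norm_num)]
      rw [e, lintegral_const_mul' _ _ ENNReal.ofReal_ne_top, lhi_D2' hR hRs]
    rw [lintegral_congr inner_eq, lintegral_indicator measurableSet_Ioi,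
      Measure.restrict_restrict measurableSet_Ioi, hseteq,
      lintegral_mul_const' _ _ ENNReal.ofReal_ne_top, hc2]
    rw [← ENNReal.ofReal_mul (by norm_num), ← ENNReal.ofReal_mul (by positivity),
      ← ENNReal.ofReal_mul (by norm_num)]
    congr 1
    field_simp
    ring
  calc ∫⁻ r in Ioi R, ENNReal.ofReal (‖f r - f R‖^2 / (r * (L r)^2))
      ≤ ∫⁻ r in Ioi R, c r * ∫⁻ s in Ioo R r, k s := mono
    _ = ∫⁻ r in Ioi R, ∫⁻ s in Ioi R, F (r, s) :=
        setLIntegral_congr_fun measurableSet_Ioi claim1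
    _ = ∫⁻ s in Ioi R, ∫⁻ r in Ioi R, F (r, s) :=
        lintegral_lintegral_swap (by exact hFmeas)
    _ = ∫⁻ s in Ioi R, ENNReal.ofReal 4 * ENNReal.ofReal (‖f' s‖^2 * s) :=
        setLIntegral_congr_fun measurableSet_Ioi claim2
    _ = ENNReal.ofReal 4 * ∫⁻ s in Ioi R, ENNReal.ofReal (‖f' s‖^2 * s) :=
        lintegral_const_mul' _ _ ENNReal.ofReal_ne_top

/-- Logarithmic Hardy inequality: if `f` is locally absolutely continuous on `(0,∞)` with
`∫₀^∞ |f'(r)|² r dr < ∞`, then for every `R > 0`,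
`(1/4) ∫₀^∞ |f(r) - f(R)|² / (r log²(R/r)) dr ≤ ∫₀^∞ |f'(r)|² r dr`. -/
theorem stmt_5 (f f' : ℝ → ℂ)
    (hloc : ∀ s ∈ Ioi (0:ℝ), ∀ t ∈ Ioi (0:ℝ), IntervalIntegrable f' volume s t)
    (hFTC : ∀ s ∈ Ioi (0:ℝ), ∀ t ∈ Ioi (0:ℝ), f t - f s = ∫ r in s..t, f' r)
    (hint : ∫⁻ r in Ioi (0:ℝ), ENNReal.ofReal (‖f' r‖^2 * r) < ⊤) :
    ∀ R : ℝ, 0 < R →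
      ENNReal.ofReal (1/4) *
          ∫⁻ r in Ioi (0:ℝ),
            ENNReal.ofReal (‖f r - f R‖^2 / (r * (Real.log (R / r))^2))
        ≤ ∫⁻ r in Ioi (0:ℝ), ENNReal.ofReal (‖f' r‖^2 * r) := by
  intro R hR
  have hmeas : AEMeasurable f' (volume.restrict (Ioi 0)) := by
    have hU : Ioi (0:ℝ) = ⋃ n : ℕ, Ioc (((n:ℝ)+1)⁻¹) ((n:ℝ)+1) := by
      ext x
      simp only [mem_Ioi, mem_iUnion, mem_Ioc]
      constructor
      · intro hx
        obtain ⟨n, hn⟩ := exists_nat_gt (max x⁻¹ x)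
        have h1 : x⁻¹ < (n:ℝ) := (le_max_left _ _).trans_lt hn
        have h2 : x < (n:ℝ) := (le_max_right _ _).trans_lt hn
        have hn0 : (0:ℝ) < (n:ℝ)+1 := by positivity
        refine ⟨n, ?_, by linarith⟩
        rw [inv_lt_comm₀ hn0 hx]
        linarith
      · rintro ⟨n, h1, _⟩
        exact lt_trans (by positivity) h1
    rw [hU]
    refine aemeasurable_iUnion_iff.2 fun n => ?_
    exact ((hloc _ (mem_Ioi.2 (by positivity)) _
      (mem_Ioi.2 (by positivity))).1).aestronglyMeasurable.aemeasurable
  have hae : (Ioo 0 R ∪ Ioi R : Set ℝ) =ᵐ[volume] Ioi (0:ℝ) := by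
    refine ae_eq_set.2 ⟨?_, ?_⟩
    · have he : (Ioo 0 R ∪ Ioi R) \ Ioi (0:ℝ) = ∅ := by
        ext x
        simp only [mem_diff, mem_union, mem_Ioo, mem_Ioi, mem_empty_iff_false, iff_false, not_and]
        rintro (h1 | h1) h2
        · exact h2 h1.1
        · exact h2 (hR.trans h1)
      rw [he]
      exact measure_empty
    · have he : Ioi (0:ℝ) \ (Ioo 0 R ∪ Ioi R) = {R} := by
        ext x
        simp only [mem_diff, mem_union, mem_Ioo, mem_Ioi, mem_singleton_iff]
        constructor
        · rintro ⟨hx, hnot⟩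
          rcases lt_trichotomy x R with h | h | h
          · exact absurd (Or.inl ⟨hx, h⟩) hnot
          · exact h
          · exact absurd (Or.inr h) hnot
        · rintro rfl
          refine ⟨hR, ?_⟩
          rintro (⟨_, h⟩ | h) <;> exact lt_irrefl _ h
      rw [he]
      exact measure_singleton R
  have hdisj : Disjoint (Ioo (0:ℝ) R) (Ioi R) := by
    rw [Set.disjoint_left]
    rintro x ⟨_, h2⟩ h3
    exact lt_irrefl x (h2.trans h3)
  rw [← Measure.restrict_congr_set hae,
    lintegral_union measurableSet_Ioi hdisj, lintegral_union measurableSet_Ioi hdisj]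
  have s1 := lhi_side_lt f f' hloc hFTC hmeas hR
  have s2 := lhi_side_gt f f' hloc hFTC hmeas hR
  refine le_trans (mul_le_mul_right (add_le_add s1 s2) _) ?_
  rw [← mul_add, ← mul_assoc, ← ENNReal.ofReal_mul (by norm_num),
    show (1/4 : ℝ) * 4 = 1 by norm_num, ENNReal.ofReal_one, one_mul]
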